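/- arXiv:2403.08110 — 4 statements merged into one kernel-verified Lean document; each statement's English description precedes it below -/
import Mathlib

section
/- Let s : Q → P be a folding of finite posets and N a Q-module such that the s-folding Fld_s(N) exists. Then for any submodule N′ ⊆ N that is s-foldable, the s-folding Fld_s(N′) exists. -/
open Module

/-! # Preamble: persistence modules over finite posets -/

/-- A `P`-module: a functor from the poset `P` to finite-dimensional
`F`-vector spaces. -/
structure PModule (F : Type) [Field F] (P : Type) [PartialOrder P] where
  V : P → Type
  [addCommGroup : ∀ p, AddCommGroup (V p)]
  [module : ∀ p, Module F (V p)]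
  [fd : ∀ p, FiniteDimensional F (V p)]
  map : ∀ {p q : P}, p ≤ q → (V p →ₗ[F] V q)
  map_id : ∀ p : P, map (le_refl p) = LinearMap.id
  map_comp : ∀ {p q r : P} (hpq : p ≤ q) (hqr : q ≤ r),
    map (hpq.trans hqr) = (map hqr).comp (map hpq)

attribute [instance] PModule.addCommGroup PModule.module PModule.fd

variable {F : Type} [Field F] {P : Type} [PartialOrder P] {Q : Type} [PartialOrder Q]

/-- A submodule of a `P`-module: a choice of subspace at every point,
preserved by the structure maps. -/
structure PSubmodule {F : Type} [Field F] {P : Type} [PartialOrder P]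
    (M : PModule F P) where
  S : ∀ p : P, Submodule F (M.V p)
  map_le : ∀ {p q : P} (h : p ≤ q), (S p).map (M.map h) ≤ S q

/-- A submodule of a `P`-module, viewed as a `P`-module in its own right
(with the restricted structure maps). -/
def PSubmodule.toModule {M : PModule F P} (A : PSubmodule M) : PModule F P where
  V p := ↥(A.S p)
  map {p q} h := (M.map h).restrict (fun x hx => A.map_le h ⟨x, hx, rfl⟩)
  map_id p := by
    apply LinearMap.ext; intro x; apply Subtype.ext
    simp [LinearMap.restrict_apply, M.map_id]
  map_comp {p q r} hpq hqr := by
    apply LinearMap.ext; intro x; apply Subtype.ext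
    simp [LinearMap.restrict_apply, M.map_comp hpq hqr]

/-- The trivial (zero) submodule predicate. -/
def PSubmodule.IsTrivial {M : PModule F P} (A : PSubmodule M) : Prop :=
  ∀ p, A.S p = ⊥

/-- Indecomposability of a submodule of a `P`-module: it is nonzero and
admits no splitting into two nonzero parts. -/
def Indecomposable (M : PModule F P) (N : PSubmodule M) : Prop :=
  ¬ N.IsTrivial ∧
    ∀ A B : PSubmodule M,
      (∀ p, Disjoint (A.S p) (B.S p)) → (∀ p, A.S p ⊔ B.S p = N.S p) →
      A.IsTrivial ∨ B.IsTrivial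

/-- An internal direct-sum decomposition of a `P`-module into submodules. -/
structure Decomp {F : Type} [Field F] {P : Type} [PartialOrder P]
    (M : PModule F P) where
  ι : Type
  [fin : Fintype ι]
  N : ι → PSubmodule M
  indep : ∀ p, iSupIndep fun i => (N i).S p
  total : ∀ p, (⨆ i, (N i).S p) = ⊤

attribute [instance] Decomp.fin

/-- A decomposition into indecomposable submodules. -/
def Decomp.Indec {M : PModule F P} (D : Decomp M) : Prop :=
  ∀ i, Indecomposable M (D.N i)

/-! ## Hasse diagram, connectivity, intervals -/

/-- Hasse-connectivity of a subset of a poset: any two of its points are joined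
inside the subset by a sequence of immediate (covering) pairs. -/
def HasseConnected (I : Set P) : Prop :=
  ∀ (p : P) (hp : p ∈ I) (q : P) (hq : q ∈ I),
    Relation.ReflTransGen (fun a b : I => (a : P) ⋖ (b : P) ∨ (b : P) ⋖ (a : P))
      ⟨p, hp⟩ ⟨q, hq⟩

/-- A connected poset: any two points are joined by a sequence of
immediate (covering) pairs. -/
def IsConnectedPoset (P : Type) [PartialOrder P] : Prop :=
  ∀ p q : P, Relation.ReflTransGen (fun a b : P => a ⋖ b ∨ b ⋖ a) p q

/-- An interval of a poset: nonempty, convex and Hasse-connected. -/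
def IsIntervalSet (I : Set P) : Prop :=
  I.Nonempty ∧
  (∀ p q r : P, p ∈ I → q ∈ I → p ≤ r → r ≤ q → r ∈ I) ∧
  HasseConnected I

/-- The support of a submodule of a `P`-module. -/
def PSubmodule.supp {M : PModule F P} (A : PSubmodule M) : Set P :=
  {p | A.S p ≠ ⊥}

/-- A submodule is an interval submodule (isomorphic to an interval module):
its support is an interval, its spaces are one-dimensional on the support and
its internal structure maps are isomorphisms on the support. -/
def IsIntervalSub (M : PModule F P) (A : PSubmodule M) : Prop :=
  IsIntervalSet A.supp ∧
  (∀ p, p ∈ A.supp → finrank F (A.S p) = 1) ∧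
  (∀ (p q : P) (h : p ≤ q), p ∈ A.supp → q ∈ A.supp →
      (A.S p).map (M.map h) = A.S q)

/-- A full interval submodule: one-dimensional everywhere with structure maps
restricting to isomorphisms. -/
def IsFullIntervalSub (M : PModule F P) (A : PSubmodule M) : Prop :=
  (∀ p, finrank F (A.S p) = 1) ∧
  (∀ (p q : P) (h : p ≤ q), (A.S p).map (M.map h) = A.S q)

/-- A decomposition into interval submodules. -/
def Decomp.IsIntervalDecomp {M : PModule F P} (D : Decomp M) : Prop :=
  ∀ i, IsIntervalSub M (D.N i)

/-! ## Limits and colimits of `P`-modules -/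

/-- The space of global sections of `M`, realized as a submodule of the
product `∀ p, M.V p` (which for finite `P` is the direct sum `⊕_p M(p)`). -/
def PModule.limSub (M : PModule F P) : Submodule F (∀ p, M.V p) where
  carrier := {v | ∀ (p q : P) (h : p ≤ q), M.map h (v p) = v q}
  add_mem' := by
    intro a b ha hb p q h
    simp only [Pi.add_apply, map_add, ha p q h, hb p q h]
  zero_mem' := by intro p q h; simp
  smul_mem' := by
    intro c a ha p q h
    simp only [Pi.smul_apply, map_smul, ha p q h]

/-- The (concrete) limit of a `P`-module. -/
def PModule.limType (M : PModule F P) : Type := ↥M.limSub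

noncomputable instance (M : PModule F P) : AddCommGroup M.limType :=
  inferInstanceAs (AddCommGroup ↥M.limSub)

noncomputable instance (M : PModule F P) : Module F M.limType :=
  inferInstanceAs (Module F ↥M.limSub)

instance (M : PModule F P) [Fintype P] : FiniteDimensional F M.limType :=
  inferInstanceAs (FiniteDimensional F ↥M.limSub)

/-- The canonical projection from the concrete limit to `M(p)`. -/
noncomputable def PModule.limProj (M : PModule F P) (p : P) : M.limType →ₗ[F] M.V p :=
  (LinearMap.proj p).comp M.limSub.subtype

/-- The subspace of relations defining the colimit:
generated by the vectors `j_p(v) - j_q(M(p ≤ q) v)`. -/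
def PModule.colimRel (M : PModule F P) [DecidableEq P] :
    Submodule F (∀ p, M.V p) :=
  Submodule.span F
    {x | ∃ (p q : P) (h : p ≤ q) (v : M.V p),
      x = Pi.single p v - Pi.single q (M.map h v)}

/-- The (concrete) colimit of a `P`-module. -/
def PModule.colimType (M : PModule F P) [DecidableEq P] : Type :=
  (∀ p, M.V p) ⧸ M.colimRel

noncomputable instance (M : PModule F P) [DecidableEq P] :
    AddCommGroup M.colimType :=
  inferInstanceAs (AddCommGroup ((∀ p, M.V p) ⧸ M.colimRel))

noncomputable instance (M : PModule F P) [DecidableEq P] : Module F M.colimType :=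
  inferInstanceAs (Module F ((∀ p, M.V p) ⧸ M.colimRel))

instance (M : PModule F P) [Fintype P] [DecidableEq P] :
    FiniteDimensional F M.colimType :=
  inferInstanceAs (FiniteDimensional F ((∀ p, M.V p) ⧸ M.colimRel))

/-- The canonical map from `M(p)` to the concrete colimit. -/
noncomputable def PModule.colimInj (M : PModule F P) [DecidableEq P] (p : P) :
    M.V p →ₗ[F] M.colimType :=
  M.colimRel.mkQ.comp (LinearMap.single F M.V p)

/-- The limit-to-colimit map obtained by passing through `M(p)`. -/
noncomputable def PModule.psiAt (M : PModule F P) [DecidableEq P] (p : P) :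
    M.limType →ₗ[F] M.colimType :=
  (M.colimInj p).comp (M.limProj p)

/-- The generalized rank computed through the point `p`. -/
noncomputable def genRankAt (M : PModule F P) [Fintype P] [DecidableEq P]
    (p : P) : ℕ :=
  finrank F (LinearMap.range (M.psiAt p))

/-- The generalized rank of a `P`-module (for connected `P` this is
independent of the chosen point). -/
noncomputable def genRank (M : PModule F P) [Fintype P] [DecidableEq P]
    [Nonempty P] : ℕ :=
  genRankAt M (Classical.arbitrary P)

/-- A cone over a `P`-module. -/
def IsCone (M : PModule F P) {L : Type} [AddCommGroup L] [Module F L]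
    (π : ∀ p, L →ₗ[F] M.V p) : Prop :=
  ∀ (p q : P) (h : p ≤ q), (M.map h).comp (π p) = π q

/-- A limit cone (terminal cone) over a `P`-module, within the category of
finite-dimensional `F`-vector spaces. -/
def IsLimitCone (M : PModule F P) {L : Type} [AddCommGroup L] [Module F L]
    (π : ∀ p, L →ₗ[F] M.V p) : Prop :=
  IsCone M π ∧
  ∀ (L' : Type) [AddCommGroup L'] [Module F L'] [FiniteDimensional F L']
    (π' : ∀ p, L' →ₗ[F] M.V p), IsCone M π' →
      ∃! u : L' →ₗ[F] L, ∀ p, (π p).comp u = π' p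

/-- A cocone over a `P`-module. -/
def IsCocone (M : PModule F P) {C : Type} [AddCommGroup C] [Module F C]
    (i : ∀ p, M.V p →ₗ[F] C) : Prop :=
  ∀ (p q : P) (h : p ≤ q), (i q).comp (M.map h) = i p

/-- A colimit cocone (initial cocone) over a `P`-module, within the category
of finite-dimensional `F`-vector spaces. -/
def IsColimitCocone (M : PModule F P) {C : Type} [AddCommGroup C] [Module F C]
    (i : ∀ p, M.V p →ₗ[F] C) : Prop :=
  IsCocone M i ∧
  ∀ (C' : Type) [AddCommGroup C'] [Module F C'] [FiniteDimensional F C']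
    (i' : ∀ p, M.V p →ₗ[F] C'), IsCocone M i' →
      ∃! u : C →ₗ[F] C', ∀ p, u.comp (i p) = i' p

/-! ## Foldings -/

/-- A folding of a poset `Q` onto a poset `P`: an order-preserving surjection
which also surjects onto the Hasse diagram of `P`. -/
structure Folding (Q P : Type) [PartialOrder Q] [PartialOrder P] where
  toFun : Q → P
  surj : Function.Surjective toFun
  mono : ∀ {a b : Q}, a ≤ b → toFun a ≤ toFun b
  hasse : ∀ {u v : P}, u ⋖ v → ∃ a b : Q, a ≤ b ∧ toFun a = u ∧ toFun b = v

/-- Precomposition of a `P`-module with a folding `s : Q → P`; this is the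
induced `s`-unfolding `Fld_s⁻¹(M) = M ∘ s`. -/
def PModule.comp (M : PModule F P) (s : Folding Q P) : PModule F Q where
  V q := M.V (s.toFun q)
  map {a b} h := M.map (s.mono h)
  map_id q := M.map_id (s.toFun q)
  map_comp {a b c} hab hbc := M.map_comp (s.mono hab) (s.mono hbc)

/-- `A` is (equal to) a submodule of the `P`-module `M`. -/
def IsSubmoduleOf (A M : PModule F P) : Prop :=
  ∃ S : PSubmodule M, S.toModule = A

/-- `s`-foldability of a submodule: it assigns equal subspaces to any two
points with the same image under the folding. -/
def PSubmodule.Foldable (s : Folding Q P) {N : PModule F Q}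
    (A : PSubmodule N) : Prop :=
  ∀ q q' : Q, s.toFun q = s.toFun q' → HEq (A.S q) (A.S q')

/-! ## Isomorphisms, direct sums and quotients of `P`-modules -/

/-- An isomorphism of `P`-modules. -/
structure PIso (A B : PModule F P) where
  e : ∀ p, A.V p ≃ₗ[F] B.V p
  comm : ∀ {p q : P} (h : p ≤ q),
    (B.map h).comp (e p : A.V p →ₗ[F] B.V p) = (e q : A.V q →ₗ[F] B.V q).comp (A.map h)

/-- The external direct sum of two `P`-modules. -/
def PModule.dsum (A B : PModule F P) : PModule F P where
  V p := A.V p × B.V p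
  map {p q} h := (A.map h).prodMap (B.map h)
  map_id p := by
    show (A.map (le_refl p)).prodMap (B.map (le_refl p)) = LinearMap.id
    rw [A.map_id, B.map_id]; exact LinearMap.prodMap_id
  map_comp {p q r} hpq hqr := by
    show (A.map (hpq.trans hqr)).prodMap (B.map (hpq.trans hqr)) =
      ((A.map hqr).prodMap (B.map hqr)).comp ((A.map hpq).prodMap (B.map hpq))
    rw [A.map_comp hpq hqr, B.map_comp hpq hqr, LinearMap.prodMap_comp]

/-- The quotient of a `P`-module by a submodule. -/
def PModule.quot (M : PModule F P) (A : PSubmodule M) : PModule F P where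
  V p := M.V p ⧸ A.S p
  map {p q} h :=
    Submodule.mapQ (A.S p) (A.S q) (M.map h)
      (Submodule.map_le_iff_le_comap.mp (A.map_le h))
  map_id p := by
    apply Submodule.linearMap_qext
    apply LinearMap.ext; intro x
    simp [Submodule.mapQ_apply, M.map_id]
  map_comp {p q r} hpq hqr := by
    apply Submodule.linearMap_qext
    apply LinearMap.ext; intro x
    simp [Submodule.mapQ_apply, M.map_comp hpq hqr]

/-! ## Zigzag posets, limit modules, representatives -/

/-- A zigzag poset: a finite poset admitting a linear enumeration of its
points in which consecutive comparabilities are exactly the immediate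
(covering) pairs. -/
def IsZigzag (P : Type) [PartialOrder P] [Fintype P] : Prop :=
  ∃ e : Fin (Fintype.card P) ≃ P,
    (∀ (i : ℕ) (h1 : i < Fintype.card P) (h2 : i + 1 < Fintype.card P),
      e ⟨i, h1⟩ ⋖ e ⟨i + 1, h2⟩ ∨ e ⟨i + 1, h2⟩ ⋖ e ⟨i, h1⟩) ∧
    (∀ a b : Fin (Fintype.card P), e a ⋖ e b →
      (a : ℕ) + 1 = b ∨ (b : ℕ) + 1 = a)

/-- A limit module: a submodule that is a direct sum of interval submodules
over pairwise disjoint intervals, all of whose internal structure maps are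
surjective. -/
def IsLimitModule (M : PModule F P) (A : PSubmodule M) : Prop :=
  (∃ (ι : Type) (C : ι → PSubmodule M),
    (∀ i, IsIntervalSub M (C i)) ∧
    (Pairwise fun i j => Disjoint (C i).supp (C j).supp) ∧
    (∀ p, A.S p = ⨆ i, (C i).S p)) ∧
  (∀ (p q : P) (h : p ≤ q), (A.S p).map (M.map h) = A.S q)

/-- A (limit) representative of a submodule: a family of vectors spanning the
subspace at every point. -/
def IsRepr {M : PModule F P} (A : PSubmodule M) (b : ∀ p, M.V p) : Prop :=
  ∀ p, A.S p = Submodule.span F {b p}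

/-! ## s-complete, convertible, invertible -/

/-- Invertibility of the complement of the summand `D.N i`: there is an
`s`-foldable submodule `Q₀` with `N = Q₀ ⊕ D.N i`. -/
def Decomp.InvertibleCompl (s : Folding Q P) {N : PModule F Q}
    (D : Decomp N) (i : D.ι) : Prop :=
  ∃ Q₀ : PSubmodule N, Q₀.Foldable s ∧ ∀ q, IsCompl (Q₀.S q) ((D.N i).S q)

/-- `s`-completeness of the summand `D.N i`: it is a full interval module
which is `s`-foldable and has invertible complement. -/
def Decomp.SComplete (s : Folding Q P) {N : PModule F Q}
    (D : Decomp N) (i : D.ι) : Prop :=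
  IsFullIntervalSub N (D.N i) ∧ (D.N i).Foldable s ∧ D.InvertibleCompl s i

/-- The number of `s`-complete interval summands in the decomposition. -/
noncomputable def Decomp.kappa (s : Folding Q P) {N : PModule F Q}
    (D : Decomp N) : ℕ :=
  Nat.card {i : D.ι // D.SComplete s i}

/-- Convertibility of the full interval summand `D.N i`: it is `s`-foldable,
or it can be made `s`-foldable by adding a combination of representatives of
limit modules of the decomposition to its representative. -/
def Decomp.Convertible (s : Folding Q P) {N : PModule F Q}
    (D : Decomp N) (i : D.ι) : Prop :=
  IsFullIntervalSub N (D.N i) ∧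
  ((D.N i).Foldable s ∨
    ∃ (bI : ∀ q, N.V q) (α : D.ι → F) (b : D.ι → ∀ q, N.V q),
      IsRepr (D.N i) bI ∧
      (∀ j, α j ≠ 0 → j ≠ i ∧ IsLimitModule N (D.N j) ∧ IsRepr (D.N j) (b j)) ∧
      ∃ I' : PSubmodule N, IsFullIntervalSub N I' ∧ I'.Foldable s ∧
        IsRepr I' (fun q => bI q + ∑ j, α j • b j q))

/-- The number of summands of the decomposition that are convertible with
invertible complement. -/
noncomputable def Decomp.tau (s : Folding Q P) {N : PModule F Q}
    (D : Decomp N) : ℕ :=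
  Nat.card {i : D.ι // D.Convertible s i ∧ D.InvertibleCompl s i}

/-! ## Poset sizes, misc -/

/-- A packaged finite poset. -/
structure FinPoset where
  carrier : Type
  [po : PartialOrder carrier]
  [ft : Fintype carrier]

attribute [instance] FinPoset.po FinPoset.ft

/-- The number of immediate (covering) pairs of a finite poset. -/
noncomputable def coverCard (P : Type) [PartialOrder P] [Fintype P] : ℕ :=
  Nat.card {x : P × P // x.1 ⋖ x.2}

/-- The size of a finite poset: number of points plus number of immediate
pairs of its Hasse diagram. -/
noncomputable def posetSize (P : Type) [PartialOrder P] [Fintype P] : ℕ :=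
  Fintype.card P + coverCard P

open Classical in
/-- Update of a function at one argument (classical version). -/
noncomputable def updFun {α β : Type} (f : α → β) (a : α) (v : β) : α → β :=
  fun x => if x = a then v else f x


/-- Auxiliary: transporting a submodule along an equality of points. -/
theorem cast_submodule_eq {F : Type} [Field F] {P : Type} [PartialOrder P]
    (M : PModule F P) {a b : P} (h : a = b)
    (A : Submodule F (M.V a)) (B : Submodule F (M.V b)) (hAB : HEq A B) :
    cast (congrArg (fun p => Submodule F (M.V p)) h) A = B := by
  subst h; exact eq_of_heq hAB

/-- Auxiliary: if a submodule of `M ∘ s` is pointwise the pullback of a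
submodule of `M`, then its associated module is the pullback of the
associated module. -/
theorem toModule_comp_of_eq {F : Type} [Field F] {Q P : Type}
    [PartialOrder Q] [PartialOrder P]
    (s : Folding Q P) (M : PModule F P) (T' : PSubmodule M)
    (U : PSubmodule (M.comp s))
    (h : U.S = fun q => T'.S (s.toFun q)) :
    U.toModule = T'.toModule.comp s := by
  obtain ⟨US, Ule⟩ := U
  have h' : US = fun q => T'.S (s.toFun q) := h
  subst h'
  rfl

/-- If `Fld_s(N)` exists, then for any `s`-foldable submodule
`N' ⊆ N` the folding `Fld_s(N')` exists. -/
theorem foldable_submodule_folding_exists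
    {F : Type} [Field F] {Q P : Type} [PartialOrder Q] [PartialOrder P]
    [Fintype Q] [Fintype P] (s : Folding Q P) (N : PModule F Q)
    (hN : ∃ M : PModule F P, N = M.comp s)
    (N' : PSubmodule N) (hfold : N'.Foldable s) :
    ∃ M' : PModule F P, N'.toModule = M'.comp s := by
  classical
  obtain ⟨M, rfl⟩ := hN
  let t : P → Q := Function.surjInv s.surj
  have hst : ∀ p, s.toFun (t p) = p := fun p => Function.surjInv_eq s.surj p
  let T : ∀ p, Submodule F (M.V p) :=
    fun p => cast (congrArg (fun x => Submodule F (M.V x)) (hst p)) (N'.S (t p))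
  have T_eq : ∀ q : Q, T (s.toFun q) = N'.S q := by
    intro q
    exact cast_submodule_eq M (hst (s.toFun q)) _ _
      (hfold (t (s.toFun q)) q (hst (s.toFun q)))
  have hcov : ∀ {u v : P} (h : u ⋖ v), (T u).map (M.map h.le) ≤ T v := by
    intro u v h
    obtain ⟨a, b, hab, ha, hb⟩ := s.hasse h
    subst ha; subst hb
    rw [T_eq a, T_eq b]
    exact N'.map_le hab
  have wf : WellFounded ((· > ·) : P → P → Prop) := wellFounded_gt
  have key : ∀ p q : P, ∀ h : p ≤ q, (T p).map (M.map h) ≤ T q := by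
    refine fun p => wf.induction
      (C := fun p => ∀ q (h : p ≤ q), (T p).map (M.map h) ≤ T q) p ?_
    intro x IH q h
    rcases eq_or_lt_of_le h with rfl | hlt
    · have hid : M.map h = LinearMap.id := M.map_id x
      rw [hid, Submodule.map_id]
    · obtain ⟨c, hxc, hcq⟩ := exists_covBy_le_of_lt hlt
      have hcomp : M.map h = (M.map hcq).comp (M.map hxc.le) :=
        M.map_comp hxc.le hcq
      rw [hcomp, Submodule.map_comp]
      exact le_trans (Submodule.map_mono (hcov hxc)) (IH c hxc.lt q hcq)
  refine ⟨(PSubmodule.mk T (fun {p q} h => key p q h)).toModule, ?_⟩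
  exact toModule_comp_of_eq s M ⟨T, fun {p q} h => key p q h⟩ N'
    (funext fun q => (T_eq q).symm)
end

section
/- Let s : Q → P be a folding of finite posets, M a P-module and N a Q-module with M = Fld_s(N). If N = N₁ ⊕ N̄₁ is an internal direct sum of submodules where both N₁ and N̄₁ are s-foldable, then Fld_s(N₁) and Fld_s(N̄₁) exist and M = Fld_s(N₁) ⊕ Fld_s(N̄₁). -/
open Module

variable {F : Type} [Field F] {P : Type} [PartialOrder P] {Q : Type} [PartialOrder Q]

section FoldAux

variable {F : Type} [Field F] {Q P : Type} [PartialOrder Q] [PartialOrder P]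

/-- Pullback of a submodule along a folding. -/
def PSubmodule.comapFold (s : Folding Q P) {M : PModule F P} (B : PSubmodule M) :
    PSubmodule (M.comp s) where
  S q := B.S (s.toFun q)
  map_le {a b} h := B.map_le (s.mono h)

lemma PSubmodule.ext' {M : PModule F P} {A B : PSubmodule M} (h : A.S = B.S) :
    A = B := by
  cases A; cases B; simpa using h

/-- The folded family of subspaces. -/
noncomputable def foldS (s : Folding Q P) {M : PModule F P}
    (A : PSubmodule (M.comp s)) (p : P) : Submodule F (M.V p) :=
  cast (congrArg (fun x => Submodule F (M.V x)) (s.surj p).choose_spec)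
    (A.S (s.surj p).choose)

lemma foldS_eq (s : Folding Q P) {M : PModule F P} {A : PSubmodule (M.comp s)}
    (hA : A.Foldable s) (q : Q) : foldS s A (s.toFun q) = A.S q := by
  refine eq_of_heq (HEq.trans (cast_heq _ _) ?_)
  exact hA _ q (s.surj (s.toFun q)).choose_spec

lemma foldS_covBy_le (s : Folding Q P) (M : PModule F P)
    (A : PSubmodule (M.comp s)) (hA : A.Foldable s) {u v : P} (huv : u ⋖ v) :
    (foldS s A u).map (M.map huv.le) ≤ foldS s A v := by
  obtain ⟨a, b, hab, ha, hb⟩ := s.hasse huv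
  subst ha; subst hb
  rw [foldS_eq s hA a, foldS_eq s hA b]
  exact A.map_le hab

lemma foldS_map_le [Fintype P] (s : Folding Q P) (M : PModule F P)
    (A : PSubmodule (M.comp s)) (hA : A.Foldable s) {p p' : P} (h : p ≤ p') :
    (foldS s A p).map (M.map h) ≤ foldS s A p' := by
  classical
  letI : LocallyFiniteOrder P := Fintype.toLocallyFiniteOrder
  suffices H : ∀ p p' : P, Relation.TransGen (· ⋖ ·) p p' →
      ∀ h : p ≤ p', (foldS s A p).map (M.map h) ≤ foldS s A p' by
    rcases eq_or_lt_of_le h with rfl | hlt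
    · rw [show M.map h = LinearMap.id from M.map_id p, Submodule.map_id]
    · exact H _ _ (transGen_covBy_of_lt hlt) h
  intro p p' ht
  induction ht with
  | single hc => intro h; exact foldS_covBy_le s M A hA hc
  | @tail b c hpb hbc ih =>
    intro h
    have hpb' : p ≤ b := (lt_iff_transGen_covBy.mpr hpb).le
    rw [show M.map h = (M.map hbc.le).comp (M.map hpb') from M.map_comp hpb' hbc.le,
      Submodule.map_comp]
    exact le_trans (Submodule.map_mono (ih hpb'))
      (foldS_covBy_le s M A hA hbc)

/-- The folding of a foldable submodule. -/
noncomputable def foldSub [Fintype P] (s : Folding Q P) {M : PModule F P}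
    (A : PSubmodule (M.comp s)) (hA : A.Foldable s) : PSubmodule M where
  S := foldS s A
  map_le h := foldS_map_le s M A hA h

lemma comapFold_foldSub [Fintype P] (s : Folding Q P) {M : PModule F P}
    (A : PSubmodule (M.comp s)) (hA : A.Foldable s) :
    (foldSub s A hA).comapFold s = A :=
  PSubmodule.ext' (funext fun q => foldS_eq s hA q)

lemma comapFold_toModule (s : Folding Q P) {M : PModule F P} (B : PSubmodule M) :
    (B.comapFold s).toModule = (B.toModule).comp s := rfl

end FoldAux

/-- If `N = N₁ ⊕ N̄₁` with both summands `s`-foldable, then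
`Fld_s(N₁)` and `Fld_s(N̄₁)` exist (as submodules of `M`) and
`M = Fld_s(N₁) ⊕ Fld_s(N̄₁)`. -/
theorem fold_of_direct_sum
    {F : Type} [Field F] {Q P : Type} [PartialOrder Q] [PartialOrder P]
    [Fintype Q] [Fintype P] (s : Folding Q P)
    (M : PModule F P) (N : PModule F Q) (hN : N = M.comp s)
    (N₁ Nbar : PSubmodule N) (hdec : ∀ q, IsCompl (N₁.S q) (Nbar.S q))
    (h1 : N₁.Foldable s) (h2 : Nbar.Foldable s) :
    ∃ M₁ M₂ : PSubmodule M,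
      N₁.toModule = (M₁.toModule).comp s ∧
      Nbar.toModule = (M₂.toModule).comp s ∧
      ∀ p, IsCompl (M₁.S p) (M₂.S p) := by
  subst hN
  refine ⟨foldSub s N₁ h1, foldSub s Nbar h2, ?_, ?_, ?_⟩
  · rw [← comapFold_toModule, comapFold_foldSub s N₁ h1]
  · rw [← comapFold_toModule, comapFold_foldSub s Nbar h2]
  · intro p
    obtain ⟨q0, rfl⟩ := s.surj p
    show IsCompl (foldS s N₁ (s.toFun q0)) (foldS s Nbar (s.toFun q0))
    rw [foldS_eq s h1, foldS_eq s h2]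
    exact hdec q0
end

section
/- For every finite connected poset P, there exist a finite zigzag poset P_ZZ and a folding s : P_ZZ → P with P = Fld_s P_ZZ, such that the size of P_ZZ (number of points plus number of immediate pairs of its Hasse diagram) is at most 2|P| + 1, where |P| is the number of points plus the number of immediate pairs of the Hasse diagram of P. -/
open Module

variable {F : Type} [Field F] {P : Type} [PartialOrder P] {Q : Type} [PartialOrder Q]

namespace ZigDev

open SimpleGraph

variable {V : Type} [Fintype V] [DecidableEq V]

open Classical in
noncomputable def compVerts (G : SimpleGraph V) (w : V) : Finset V :=
  Finset.univ.filter (fun x => G.Reachable w x)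

open Classical in
noncomputable def compEdges (G : SimpleGraph V) (w : V) : Finset (Sym2 V) :=
  Finset.univ.filter (fun f => f ∈ G.edgeSet ∧ ∃ x ∈ f, G.Reachable w x)

open Classical in
noncomputable def edgeFin (G : SimpleGraph V) : Finset (Sym2 V) :=
  Finset.univ.filter (fun f => f ∈ G.edgeSet)

lemma mem_compVerts {G : SimpleGraph V} {w x : V} :
    x ∈ compVerts G w ↔ G.Reachable w x := by simp [compVerts]

lemma mem_compEdges {G : SimpleGraph V} {w : V} {f : Sym2 V} :
    f ∈ compEdges G w ↔ f ∈ G.edgeSet ∧ ∃ x ∈ f, G.Reachable w x := by simp [compEdges]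

lemma mem_edgeFin {G : SimpleGraph V} {f : Sym2 V} :
    f ∈ edgeFin G ↔ f ∈ G.edgeSet := by simp [edgeFin]

omit [Fintype V] [DecidableEq V] in
lemma reach_delete {G : SimpleGraph V} {w v : V}
    (hr : (G.deleteEdges {s(w, v)}).Reachable w v) :
    ∀ a b : V, G.Reachable a b → (G.deleteEdges {s(w, v)}).Reachable a b := by
  intro a b hab
  obtain ⟨p⟩ := hab
  induction p with
  | nil => exact Reachable.refl _
  | cons h q ih =>
    rename_i x y z
    refine Reachable.trans ?_ ih
    by_cases he : s(x, y) = s(w, v)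
    · rcases Sym2.eq_iff.mp he with h1 | h1
      · have h2 : x = w ∧ y = v := by simpa [Prod.ext_iff] using h1
        obtain ⟨rfl, rfl⟩ := h2
        exact hr
      · have h2 : x = v ∧ y = w := by simpa [Prod.ext_iff] using h1
        obtain ⟨rfl, rfl⟩ := h2
        exact hr.symm
    · exact (SimpleGraph.deleteEdges_adj.mpr ⟨h, by simpa using he⟩).reachable

omit [Fintype V] [DecidableEq V] in
lemma reach_union {G : SimpleGraph V} {w v : V} :
    ∀ a b : V,
      ((G.deleteEdges {s(w, v)}).Reachable w a ∨ (G.deleteEdges {s(w, v)}).Reachable v a) →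
      G.Reachable a b →
      ((G.deleteEdges {s(w, v)}).Reachable w b ∨ (G.deleteEdges {s(w, v)}).Reachable v b) := by
  intro a b ha hab
  obtain ⟨p⟩ := hab
  induction p with
  | nil => exact ha
  | cons h q ih =>
    rename_i x y z
    apply ih
    by_cases he : s(x, y) = s(w, v)
    · rcases Sym2.eq_iff.mp he with h1 | h1
      · have h2 : x = w ∧ y = v := by simpa [Prod.ext_iff] using h1
        exact Or.inr (h2.2 ▸ Reachable.refl _)
      · have h2 : x = v ∧ y = w := by simpa [Prod.ext_iff] using h1
        exact Or.inl (h2.2 ▸ Reachable.refl _)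
    · have hadj : (G.deleteEdges {s(w, v)}).Adj x y :=
        SimpleGraph.deleteEdges_adj.mpr ⟨h, by simpa using he⟩
      rcases ha with ha | ha
      · exact Or.inl (ha.trans hadj.reachable)
      · exact Or.inr (ha.trans hadj.reachable)

omit [Fintype V] [DecidableEq V] in
lemma isolated_reach {G : SimpleGraph V} {w x : V} (h : ∀ v, ¬ G.Adj w v)
    (hr : G.Reachable w x) : x = w := by
  obtain ⟨p⟩ := hr
  cases p with
  | nil => rfl
  | cons hadj q => exact absurd hadj (h _)

omit [Fintype V] [DecidableEq V] in
lemma adj_of_mem_edge {G : SimpleGraph V} {f : Sym2 V} (hf : f ∈ G.edgeSet)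
    {x y : V} (hx : x ∈ f) (hy : y ∈ f) : x = y ∨ G.Adj x y := by
  induction f with
  | _ a b =>
    rw [Sym2.mem_iff] at hx hy
    have hadj : G.Adj a b := hf
    rcases hx with rfl | rfl <;> rcases hy with rfl | rfl
    · exact Or.inl rfl
    · exact Or.inr hadj
    · exact Or.inr hadj.symm
    · exact Or.inl rfl

omit [Fintype V] [DecidableEq V] in
lemma edges_mapLe {G G' : SimpleGraph V} (hle : G ≤ G') {a b : V} (q : G.Walk a b) :
    (q.mapLe hle).edges = q.edges := by
  rw [Walk.mapLe, Walk.edges_map]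
  have : Sym2.map ⇑(Hom.ofLE hle) = id := by
    funext f
    induction f with
    | _ x y => rfl
  rw [this, List.map_id]

theorem exists_cover_walk (E : ℕ) :
    ∀ (G : SimpleGraph V), (edgeFin G).card ≤ E → ∀ w w' : V, G.Reachable w w' →
    ∃ p : G.Walk w w',
      (∀ f ∈ G.edgeSet, (∃ x ∈ f, G.Reachable w x) → f ∈ p.edges) ∧
      p.length + 1 ≤ (compEdges G w).card + (compVerts G w).card := by
  induction E with
  | zero =>
    intro G hE w w' hww'
    have hiso : ∀ v, ¬ G.Adj w v := by
      intro v hv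
      have : s(w, v) ∈ edgeFin G := mem_edgeFin.mpr hv
      have := Finset.card_pos.mpr ⟨_, this⟩
      omega
    have hw' : w' = w := isolated_reach hiso hww'
    subst hw'
    refine ⟨Walk.nil, ?_, ?_⟩
    · intro f hf ⟨x, hxf, hxr⟩
      have hx : x = w' := isolated_reach hiso hxr
      subst hx
      rcases adj_of_mem_edge hf hxf hxf with h | h
      · -- need a second point of f
        exfalso
        induction f with
        | _ a b =>
          have hadj : G.Adj a b := hf
          rw [Sym2.mem_iff] at hxf
          rcases hxf with rfl | rfl
          · exact hiso b hadj
          · exact hiso a hadj.symm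
      · exact absurd h (G.loopless.irrefl _)
    · have : w' ∈ compVerts G w' := mem_compVerts.mpr (Reachable.refl _)
      have := Finset.card_pos.mpr ⟨_, this⟩
      simp only [Walk.length_nil]
      omega
  | succ E ih =>
    intro G hE w w' hww'
    by_cases hex : ∃ v, G.Adj w v
    case neg =>
      -- isolated vertex, same as base case
      push_neg at hex
      have hw' : w' = w := isolated_reach (fun v => hex v) hww'
      subst hw'
      refine ⟨Walk.nil, ?_, ?_⟩
      · intro f hf ⟨x, hxf, hxr⟩
        have hx : x = w' := isolated_reach (fun v => hex v) hxr
        subst hx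
        exfalso
        induction f with
        | _ a b =>
          have hadj : G.Adj a b := hf
          rw [Sym2.mem_iff] at hxf
          rcases hxf with rfl | rfl
          · exact hex b hadj
          · exact hex a hadj.symm
      · have : w' ∈ compVerts G w' := mem_compVerts.mpr (Reachable.refl _)
        have := Finset.card_pos.mpr ⟨_, this⟩
        simp only [Walk.length_nil]
        omega
    case pos =>
    obtain ⟨v, hwv⟩ := hex
    set G' := G.deleteEdges {s(w, v)} with hG'
    have hle : G' ≤ G := SimpleGraph.deleteEdges_le _
    have hens : s(w, v) ∈ G.edgeSet := hwv
    have hend : s(w, v) ∉ G'.edgeSet := by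
      rw [hG', SimpleGraph.edgeSet_deleteEdges]
      simp
    have hG'edge : ∀ f : Sym2 V, f ∈ G'.edgeSet ↔ f ∈ G.edgeSet ∧ f ≠ s(w, v) := by
      intro f
      rw [hG', SimpleGraph.edgeSet_deleteEdges]
      simp
    have hcard : (edgeFin G').card ≤ E := by
      have hsub : edgeFin G' ⊆ edgeFin G := by
        intro f hf
        exact mem_edgeFin.mpr (((hG'edge f).mp (mem_edgeFin.mp hf)).1)
      have hmem : s(w, v) ∈ edgeFin G := mem_edgeFin.mpr hens
      have hnot : s(w, v) ∉ edgeFin G' := fun h => hend (mem_edgeFin.mp h)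
      have := Finset.card_lt_card ((Finset.ssubset_iff_of_subset hsub).mpr ⟨_, hmem, hnot⟩)
      omega
    by_cases hr : G'.Reachable w v
    case pos =>
      -- deleting the edge keeps the component connected
      have hRa : ∀ a b, G.Reachable a b → G'.Reachable a b := reach_delete hr
      have hvw' : G'.Reachable v w' := hr.symm.trans (hRa w w' hww')
      obtain ⟨q, hqcov, hqlen⟩ := ih G' hcard v w' hvw'
      refine ⟨Walk.cons hwv (q.mapLe hle), ?_, ?_⟩
      · intro f hf ⟨x, hxf, hxr⟩
        rw [Walk.edges_cons, edges_mapLe]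
        by_cases hfe : f = s(w, v)
        · exact hfe ▸ List.mem_cons_self
        · have hf' : f ∈ G'.edgeSet := (hG'edge f).mpr ⟨hf, hfe⟩
          exact List.mem_cons_of_mem _
            (hqcov f hf' ⟨x, hxf, hr.symm.trans (hRa w x hxr)⟩)
      · have hlen : (Walk.cons hwv (q.mapLe hle)).length = q.length + 1 := by
          rw [Walk.length_cons, Walk.mapLe, Walk.length_map]
        have hE1 : (compEdges G' v).card + 1 ≤ (compEdges G w).card := by
          have hsub : insert (s(w, v)) (compEdges G' v) ⊆ compEdges G w := by
            intro f hf
            rcases Finset.mem_insert.mp hf with rfl | hf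
            · exact mem_compEdges.mpr ⟨hens, w, Sym2.mem_mk_left _ _, Reachable.refl _⟩
            · obtain ⟨hf1, x, hxf, hxr⟩ := mem_compEdges.mp hf
              exact mem_compEdges.mpr ⟨SimpleGraph.edgeSet_mono hle hf1, x, hxf,
                (hwv.reachable.trans (hxr.mono hle))⟩
          have hnm : s(w, v) ∉ compEdges G' v := fun h => hend (mem_compEdges.mp h).1
          calc (compEdges G' v).card + 1 = (insert (s(w, v)) (compEdges G' v)).card := by
                rw [Finset.card_insert_of_notMem hnm]
            _ ≤ (compEdges G w).card := Finset.card_le_card hsub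
        have hV1 : (compVerts G' v).card ≤ (compVerts G w).card := by
          apply Finset.card_le_card
          intro x hx
          exact mem_compVerts.mpr (hwv.reachable.trans ((mem_compVerts.mp hx).mono hle))
        omega
    case neg =>
      have hB : ∀ x, G.Reachable w x → G'.Reachable w x ∨ G'.Reachable v x :=
        fun x hx => reach_union w x (Or.inl (Reachable.refl _)) hx
      have hVsub : compVerts G' w ∪ compVerts G' v ⊆ compVerts G w := by
        intro x hx
        rcases Finset.mem_union.mp hx with hx | hx
        · exact mem_compVerts.mpr ((mem_compVerts.mp hx).mono hle)
        · exact mem_compVerts.mpr (hwv.reachable.trans ((mem_compVerts.mp hx).mono hle))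
      have hVdisj : Disjoint (compVerts G' w) (compVerts G' v) := by
        rw [Finset.disjoint_left]
        intro x hx1 hx2
        exact hr ((mem_compVerts.mp hx1).trans (mem_compVerts.mp hx2).symm)
      have hVcard : (compVerts G' w).card + (compVerts G' v).card ≤ (compVerts G w).card := by
        rw [← Finset.card_union_of_disjoint hVdisj]
        exact Finset.card_le_card hVsub
      have hEdisj : Disjoint (compEdges G' w) (compEdges G' v) := by
        rw [Finset.disjoint_left]
        intro f hf1 hf2
        obtain ⟨hfe, x, hxf, hxw⟩ := mem_compEdges.mp hf1
        obtain ⟨_, y, hyf, hyv⟩ := mem_compEdges.mp hf2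
        have hxy : G'.Reachable x y := by
          rcases adj_of_mem_edge hfe hxf hyf with rfl | h
          · exact Reachable.refl _
          · exact h.reachable
        exact hr (hxw.trans (hxy.trans hyv.symm))
      have hEsub : insert (s(w, v)) (compEdges G' w ∪ compEdges G' v) ⊆ compEdges G w := by
        intro f hf
        rcases Finset.mem_insert.mp hf with rfl | hf
        · exact mem_compEdges.mpr ⟨hens, w, Sym2.mem_mk_left _ _, Reachable.refl _⟩
        · rcases Finset.mem_union.mp hf with hf | hf
          · obtain ⟨hf1, x, hxf, hxr⟩ := mem_compEdges.mp hf
            exact mem_compEdges.mpr ⟨SimpleGraph.edgeSet_mono hle hf1, x, hxf, hxr.mono hle⟩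
          · obtain ⟨hf1, x, hxf, hxr⟩ := mem_compEdges.mp hf
            exact mem_compEdges.mpr ⟨SimpleGraph.edgeSet_mono hle hf1, x, hxf,
              hwv.reachable.trans (hxr.mono hle)⟩
      have hEnm : s(w, v) ∉ compEdges G' w ∪ compEdges G' v := by
        intro h
        rcases Finset.mem_union.mp h with h | h <;> exact hend (mem_compEdges.mp h).1
      have hEcard : (compEdges G' w).card + (compEdges G' v).card + 1
          ≤ (compEdges G w).card := by
        calc (compEdges G' w).card + (compEdges G' v).card + 1
            = (insert (s(w, v)) (compEdges G' w ∪ compEdges G' v)).card := by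
              rw [Finset.card_insert_of_notMem hEnm, Finset.card_union_of_disjoint hEdisj]
          _ ≤ (compEdges G w).card := Finset.card_le_card hEsub
      -- where does w' live?
      rcases hB w' hww' with h1 | h2
      · obtain ⟨p1, h1cov, h1len⟩ := ih G' hcard w w' h1
        obtain ⟨p2, h2cov, h2len⟩ := ih G' hcard v v (Reachable.refl v)
        refine ⟨Walk.cons hwv ((p2.mapLe hle).append (Walk.cons hwv.symm (p1.mapLe hle))),
          ?_, ?_⟩
        · intro f hf ⟨x, hxf, hxr⟩
          rw [Walk.edges_cons, Walk.edges_append, Walk.edges_cons, edges_mapLe, edges_mapLe]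
          by_cases hfe : f = s(w, v)
          · exact hfe ▸ List.mem_cons_self
          · have hf' : f ∈ G'.edgeSet := (hG'edge f).mpr ⟨hf, hfe⟩
            apply List.mem_cons_of_mem
            rw [List.mem_append]
            rcases hB x hxr with hx | hx
            · exact Or.inr (List.mem_cons_of_mem _ (h1cov f hf' ⟨x, hxf, hx⟩))
            · exact Or.inl (h2cov f hf' ⟨x, hxf, hx⟩)
        · have hlen : (Walk.cons hwv ((p2.mapLe hle).append
              (Walk.cons hwv.symm (p1.mapLe hle)))).length
              = p2.length + p1.length + 2 := by
            rw [Walk.length_cons, Walk.length_append, Walk.length_cons, Walk.mapLe,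
              Walk.length_map, Walk.mapLe, Walk.length_map]
            omega
          omega
      · obtain ⟨p1, h1cov, h1len⟩ := ih G' hcard w w (Reachable.refl w)
        obtain ⟨p2, h2cov, h2len⟩ := ih G' hcard v w' h2
        refine ⟨(p1.mapLe hle).append (Walk.cons hwv (p2.mapLe hle)), ?_, ?_⟩
        · intro f hf ⟨x, hxf, hxr⟩
          rw [Walk.edges_append, Walk.edges_cons, edges_mapLe, edges_mapLe]
          rw [List.mem_append]
          by_cases hfe : f = s(w, v)
          · exact Or.inr (hfe ▸ List.mem_cons_self)
          · have hf' : f ∈ G'.edgeSet := (hG'edge f).mpr ⟨hf, hfe⟩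
            rcases hB x hxr with hx | hx
            · exact Or.inl (h1cov f hf' ⟨x, hxf, hx⟩)
            · exact Or.inr (List.mem_cons_of_mem _ (h2cov f hf' ⟨x, hxf, hx⟩))
        · have hlen : ((p1.mapLe hle).append (Walk.cons hwv (p2.mapLe hle))).length
              = p1.length + p2.length + 1 := by
            rw [Walk.length_append, Walk.length_cons, Walk.mapLe,
              Walk.length_map, Walk.mapLe, Walk.length_map]
            omega
          omega

/-- The order relation of a zigzag poset built from a direction predicate. -/
def ZigLE (d : ℕ → Prop) (i j : ℕ) : Prop :=
  (i ≤ j ∧ ∀ k, i ≤ k → k < j → d k) ∨ (j ≤ i ∧ ∀ k, j ≤ k → k < i → ¬ d k)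

lemma ZigLE.refl (d : ℕ → Prop) (i : ℕ) : ZigLE d i i :=
  Or.inl ⟨le_rfl, fun k h1 h2 => absurd (lt_of_le_of_lt h1 h2) (lt_irrefl _)⟩

lemma ZigLE.antisymm {d : ℕ → Prop} {i j : ℕ} (h : ZigLE d i j) (h' : ZigLE d j i) :
    i = j := by
  rcases h with ⟨h1, h2⟩ | ⟨h1, h2⟩ <;> rcases h' with ⟨h3, h4⟩ | ⟨h3, h4⟩
  · omega
  · by_contra hne
    have hij : i < j := lt_of_le_of_ne h1 hne
    exact (h4 i le_rfl hij) (h2 i le_rfl hij)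
  · by_contra hne
    have hji : j < i := lt_of_le_of_ne h1 (Ne.symm hne)
    exact (h2 j le_rfl hji) (h4 j le_rfl hji)
  · omega

lemma ZigLE.trans {d : ℕ → Prop} {i j k : ℕ} (h : ZigLE d i j) (h' : ZigLE d j k) :
    ZigLE d i k := by
  rcases h with ⟨h1, h2⟩ | ⟨h1, h2⟩ <;> rcases h' with ⟨h3, h4⟩ | ⟨h3, h4⟩
  · exact Or.inl ⟨h1.trans h3, fun l hl1 hl2 => by
      by_cases hlj : l < j
      · exact h2 l hl1 hlj
      · exact h4 l (by omega) hl2⟩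
  · rcases eq_or_lt_of_le h1 with rfl | hij
    · exact Or.inr ⟨h3, h4⟩
    · rcases eq_or_lt_of_le h3 with rfl | hkj
      · exact Or.inl ⟨h1, h2⟩
      · exact absurd (h2 (j - 1) (by omega) (by omega)) (h4 (j - 1) (by omega) (by omega))
  · rcases eq_or_lt_of_le h1 with rfl | hji
    · exact Or.inl ⟨h3, h4⟩
    · rcases eq_or_lt_of_le h3 with rfl | hjk
      · exact Or.inr ⟨h1, h2⟩
      · exact absurd (h4 j le_rfl hjk) (h2 j le_rfl hji)
  · exact Or.inr ⟨h3.trans h1, fun l hl1 hl2 => by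
      by_cases hlj : l < j
      · exact h4 l hl1 hlj
      · exact h2 l (by omega) hl2⟩

/-- The carrier of a zigzag poset with `m + 1` points. -/
def Zig (m : ℕ) (d : ℕ → Prop) : Type := Fin (m + 1)

/-- The underlying `Fin`. -/
def Zig.toFin {m : ℕ} {d : ℕ → Prop} (a : Zig m d) : Fin (m + 1) := a

/-- Make an element of `Zig`. -/
def Zig.mk {m : ℕ} {d : ℕ → Prop} (i : Fin (m + 1)) : Zig m d := i

instance {m : ℕ} {d : ℕ → Prop} : PartialOrder (Zig m d) where
  le a b := ZigLE d a.toFin.1 b.toFin.1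
  le_refl a := ZigLE.refl d _
  le_trans a b c h1 h2 := ZigLE.trans h1 h2
  le_antisymm a b h1 h2 := by
    have : a.toFin = b.toFin := Fin.ext (ZigLE.antisymm h1 h2)
    exact this

instance {m : ℕ} {d : ℕ → Prop} : Fintype (Zig m d) :=
  inferInstanceAs (Fintype (Fin (m + 1)))

lemma Zig.card (m : ℕ) (d : ℕ → Prop) : Fintype.card (Zig m d) = m + 1 :=
  Fintype.card_fin (m + 1)

lemma zig_le_iff {m : ℕ} {d : ℕ → Prop} {a b : Zig m d} :
    a ≤ b ↔ ZigLE d a.toFin.1 b.toFin.1 := Iff.rfl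

lemma zig_ext {m : ℕ} {d : ℕ → Prop} {a b : Zig m d}
    (h : a.toFin.1 = b.toFin.1) : a = b := by
  have : a.toFin = b.toFin := Fin.ext h
  exact this

lemma zig_lt_iff {m : ℕ} {d : ℕ → Prop} {a b : Zig m d} :
    a < b ↔ (a.toFin.1 < b.toFin.1 ∧ ∀ k, a.toFin.1 ≤ k → k < b.toFin.1 → d k) ∨
      (b.toFin.1 < a.toFin.1 ∧ ∀ k, b.toFin.1 ≤ k → k < a.toFin.1 → ¬ d k) := by
  rw [lt_iff_le_and_ne]
  constructor
  · rintro ⟨hle, hne⟩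
    have hne' : a.toFin.1 ≠ b.toFin.1 := fun h => hne (zig_ext h)
    rcases zig_le_iff.mp hle with ⟨h1, h2⟩ | ⟨h1, h2⟩
    · exact Or.inl ⟨lt_of_le_of_ne h1 hne', h2⟩
    · exact Or.inr ⟨lt_of_le_of_ne h1 (Ne.symm hne'), h2⟩
  · rintro (⟨h1, h2⟩ | ⟨h1, h2⟩)
    · exact ⟨zig_le_iff.mpr (Or.inl ⟨h1.le, h2⟩), fun h => by
        subst h; exact lt_irrefl _ h1⟩
    · exact ⟨zig_le_iff.mpr (Or.inr ⟨h1.le, h2⟩), fun h => by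
        subst h; exact lt_irrefl _ h1⟩

lemma zig_covby_iff {m : ℕ} {d : ℕ → Prop} {a b : Zig m d} :
    a ⋖ b ↔ (b.toFin.1 = a.toFin.1 + 1 ∧ d a.toFin.1) ∨
      (a.toFin.1 = b.toFin.1 + 1 ∧ ¬ d b.toFin.1) := by
  constructor
  · rintro ⟨hlt, hmid⟩
    rcases zig_lt_iff.mp hlt with ⟨h1, h2⟩ | ⟨h1, h2⟩
    · by_cases hj : b.toFin.1 = a.toFin.1 + 1
      · exact Or.inl ⟨hj, h2 _ le_rfl (by omega)⟩
      · exfalso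
        have hlt2 : a.toFin.1 + 1 < b.toFin.1 := by omega
        set c : Zig m d := Zig.mk ⟨a.toFin.1 + 1, by omega⟩ with hc
        have hcval : c.toFin.1 = a.toFin.1 + 1 := rfl
        refine hmid (c := c) ?_ ?_
        · exact zig_lt_iff.mpr (Or.inl ⟨by omega, fun k hk1 hk2 => h2 k hk1 (by omega)⟩)
        · exact zig_lt_iff.mpr (Or.inl ⟨by omega, fun k hk1 hk2 => h2 k (by omega) hk2⟩)
    · by_cases hi : a.toFin.1 = b.toFin.1 + 1
      · exact Or.inr ⟨hi, h2 _ le_rfl (by omega)⟩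
      · exfalso
        have hlt2 : b.toFin.1 + 1 < a.toFin.1 := by omega
        set c : Zig m d := Zig.mk ⟨b.toFin.1 + 1, by omega⟩ with hc
        have hcval : c.toFin.1 = b.toFin.1 + 1 := rfl
        refine hmid (c := c) ?_ ?_
        · exact zig_lt_iff.mpr (Or.inr ⟨by omega, fun k hk1 hk2 => h2 k (by omega) hk2⟩)
        · exact zig_lt_iff.mpr (Or.inr ⟨by omega, fun k hk1 hk2 => h2 k hk1 (by omega)⟩)
  · rintro (⟨hj, hd⟩ | ⟨hi, hd⟩)
    · constructor
      · exact zig_lt_iff.mpr (Or.inl ⟨by omega, fun k hk1 hk2 => by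
          have : k = a.toFin.1 := by omega
          exact this ▸ hd⟩)
      · intro c hac hcb
        rcases zig_lt_iff.mp hac with ⟨h1, h2⟩ | ⟨h1, h2⟩ <;>
          rcases zig_lt_iff.mp hcb with ⟨h3, h4⟩ | ⟨h3, h4⟩
        · omega
        · exact (h4 b.toFin.1 (by omega) (by omega)) (h2 b.toFin.1 (by omega) (by omega))
        · exact (h2 c.toFin.1 le_rfl h1) (h4 c.toFin.1 le_rfl h3)
        · omega
    · constructor
      · exact zig_lt_iff.mpr (Or.inr ⟨by omega, fun k hk1 hk2 => by
          have : k = b.toFin.1 := by omega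
          exact this ▸ hd⟩)
      · intro c hac hcb
        rcases zig_lt_iff.mp hac with ⟨h1, h2⟩ | ⟨h1, h2⟩ <;>
          rcases zig_lt_iff.mp hcb with ⟨h3, h4⟩ | ⟨h3, h4⟩
        · omega
        · exact (h4 a.toFin.1 (by omega) (by omega)) (h2 a.toFin.1 le_rfl (by omega))
        · exact (h2 c.toFin.1 le_rfl h1) (h4 c.toFin.1 le_rfl h3)
        · omega


/-! ### extra zig lemmas -/

lemma zig_cover_card_le (m : ℕ) (d : ℕ → Prop) :
    Nat.card {x : Zig m d × Zig m d // x.1 ⋖ x.2} ≤ m := by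
  classical
  have key : ∀ x : {x : Zig m d × Zig m d // x.1 ⋖ x.2},
      min x.1.1.toFin.1 x.1.2.toFin.1 < m := by
    rintro ⟨⟨a, b⟩, hab⟩
    change a ⋖ b at hab
    show min a.toFin.1 b.toFin.1 < m
    rcases zig_covby_iff.mp hab with ⟨h, _⟩ | ⟨h, _⟩
    · have := b.toFin.2
      omega
    · have := a.toFin.2
      omega
  have hinj : Function.Injective (fun x : {x : Zig m d × Zig m d // x.1 ⋖ x.2} =>
      (⟨min x.1.1.toFin.1 x.1.2.toFin.1, key x⟩ : Fin m)) := by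
    rintro ⟨⟨a, b⟩, hab⟩ ⟨⟨a', b'⟩, hab'⟩ h
    change a ⋖ b at hab
    change a' ⋖ b' at hab'
    simp only [Fin.mk.injEq] at h
    replace h : min a.toFin.1 b.toFin.1 = min a'.toFin.1 b'.toFin.1 := h
    rcases zig_covby_iff.mp hab with ⟨e1, e2⟩ | ⟨e1, e2⟩ <;>
      rcases zig_covby_iff.mp hab' with ⟨f1, f2⟩ | ⟨f1, f2⟩
    · exact Subtype.ext (Prod.ext (zig_ext (show a.toFin.1 = a'.toFin.1 by omega))
        (zig_ext (show b.toFin.1 = b'.toFin.1 by omega)))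
    · exfalso
      have hv : a.toFin.1 = b'.toFin.1 := by omega
      exact f2 (hv ▸ e2)
    · exfalso
      have hv : a'.toFin.1 = b.toFin.1 := by omega
      exact e2 (hv ▸ f2)
    · exact Subtype.ext (Prod.ext (zig_ext (show a.toFin.1 = a'.toFin.1 by omega))
        (zig_ext (show b.toFin.1 = b'.toFin.1 by omega)))
  calc Nat.card {x : Zig m d × Zig m d // x.1 ⋖ x.2}
      ≤ Nat.card (Fin m) := Nat.card_le_card_of_injective _ hinj
    _ = m := by rw [Nat.card_eq_fintype_card, Fintype.card_fin]

lemma zig_isZigzag (m : ℕ) (d : ℕ → Prop) : IsZigzag (Zig m d) := by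
  refine ⟨(finCongr (Zig.card m d)).trans (Equiv.refl (Zig m d)), ?_, ?_⟩
  · intro i h1 h2
    by_cases hdi : d i
    · exact Or.inl (zig_covby_iff.mpr (Or.inl ⟨rfl, hdi⟩))
    · exact Or.inr (zig_covby_iff.mpr (Or.inr ⟨rfl, hdi⟩))
  · intro a b hab
    rcases zig_covby_iff.mp hab with ⟨h, _⟩ | ⟨h, _⟩
    · exact Or.inl h.symm
    · exact Or.inr h.symm

/-! ### walk edge indexing -/

omit [Fintype V] [DecidableEq V] in
lemma walk_edge_index {G : SimpleGraph V} {u v : V} (p : G.Walk u v) {f : Sym2 V}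
    (hf : f ∈ p.edges) :
    ∃ i, i < p.length ∧ s(p.getVert i, p.getVert (i + 1)) = f := by
  induction p with
  | nil => simp at hf
  | cons h q ih =>
    rename_i x y z
    rw [Walk.edges_cons] at hf
    rcases List.mem_cons.mp hf with rfl | hf
    · refine ⟨0, by simp [Walk.length_cons], ?_⟩
      rw [Walk.getVert_zero, Walk.getVert_cons_succ, Walk.getVert_zero]
    · obtain ⟨i, hi, hs⟩ := ih hf
      refine ⟨i + 1, by rw [Walk.length_cons]; omega, ?_⟩
      rw [Walk.getVert_cons_succ, Walk.getVert_cons_succ]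
      exact hs

/-! ### monotone chains -/

lemma chain_up {α : Type} [PartialOrder α] (g : ℕ → α) :
    ∀ i j, i ≤ j → (∀ k, i ≤ k → k < j → g k ⋖ g (k + 1)) → g i ≤ g j := by
  intro i j hij
  induction j, hij using Nat.le_induction with
  | base => intro _; exact le_rfl
  | succ n hn ih =>
    intro h
    exact (ih (fun k h1 h2 => h k h1 (by omega))).trans (h n hn (by omega)).le

lemma chain_down {α : Type} [PartialOrder α] (g : ℕ → α) :
    ∀ i j, i ≤ j → (∀ k, i ≤ k → k < j → g (k + 1) ⋖ g k) → g j ≤ g i := by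
  intro i j hij
  induction j, hij using Nat.le_induction with
  | base => intro _; exact le_rfl
  | succ n hn ih =>
    intro h
    exact (h n hn (by omega)).le.trans (ih (fun k h1 h2 => h k h1 (by omega)))

end ZigDev


/-- Every finite connected poset `P` unfolds to a finite zigzag
poset `P_ZZ` via a folding `s : P_ZZ → P`, with `|P_ZZ| ≤ 2|P| + 1` (sizes
count points plus immediate pairs of the Hasse diagram). -/
theorem zigzag_unfolding_of_poset_exists
    {P : Type} [PartialOrder P] [Fintype P] (hconn : IsConnectedPoset P) :
    ∃ Z : FinPoset, IsZigzag Z.carrier ∧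
      ∃ _s : Folding Z.carrier P, posetSize Z.carrier ≤ 2 * posetSize P + 1 := by
  classical
  open ZigDev SimpleGraph in
  cases isEmpty_or_nonempty P with
  | inl hP =>
    refine ⟨⟨Fin 0⟩, ?_, ?_, ?_⟩
    · refine ⟨finCongr (Fintype.card_fin 0), ?_, ?_⟩
      · intro i h1 h2
        rw [Fintype.card_fin] at h1
        exact absurd h1 (Nat.not_lt_zero i)
      · intro a b hab
        exact (finCongr (Fintype.card_fin 0) a).elim0
    · exact { toFun := fun a => a.elim0
              surj := fun x => (hP.false x).elim
              mono := fun {a b} _ => a.elim0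
              hasse := fun {u v} _ => (hP.false u).elim }
    · show posetSize (Fin 0) ≤ 2 * posetSize P + 1
      have : IsEmpty {x : Fin 0 × Fin 0 // x.1 ⋖ x.2} := ⟨fun x => x.1.1.elim0⟩
      rw [posetSize, coverCard, Fintype.card_fin, Nat.card_of_isEmpty]
      omega
  | inr hne =>
    obtain ⟨w0⟩ := hne
    let G : SimpleGraph P :=
      { Adj := fun a b => a ⋖ b ∨ b ⋖ a
        symm := ⟨fun a b h => Or.symm h⟩
        loopless := ⟨fun a h => by rcases h with h | h <;> exact h.ne rfl⟩ }
    have hGadj : ∀ a b : P, G.Adj a b ↔ (a ⋖ b ∨ b ⋖ a) := fun _ _ => Iff.rfl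
    have hreach : ∀ a b : P, G.Reachable a b := by
      intro a b
      have h := hconn a b
      induction h with
      | refl => exact Reachable.refl _
      | tail _ hbc ih => exact ih.trans (SimpleGraph.Adj.reachable ((hGadj _ _).mpr hbc))
    obtain ⟨p, hcov, hlen⟩ :=
      exists_cover_walk (edgeFin G).card G le_rfl w0 w0 (Reachable.refl w0)
    set m := p.length with hm
    set wf : ℕ → P := fun k => p.getVert k with hwf
    set d : ℕ → Prop := fun k => wf k ⋖ wf (k + 1) with hd
    have hadjk : ∀ k, k < m → G.Adj (wf k) (wf (k + 1)) :=
      fun k hk => p.adj_getVert_succ hk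
    have hedge : ∀ u v : P, G.Adj u v →
        ∃ i, i < m ∧ ((wf i = u ∧ wf (i + 1) = v) ∨ (wf i = v ∧ wf (i + 1) = u)) := by
      intro u v huv
      have hf : s(u, v) ∈ p.edges :=
        hcov _ ((G.mem_edgeSet).mpr huv) ⟨u, Sym2.mem_mk_left _ _, hreach w0 u⟩
      obtain ⟨i, hi, hs⟩ := walk_edge_index p hf
      rcases Sym2.eq_iff.mp hs with h | h
      · have h1 : p.getVert i = u ∧ p.getVert (i + 1) = v := by
          simpa [Prod.ext_iff] using h
        exact ⟨i, hi, Or.inl ⟨h1.1, h1.2⟩⟩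
      · have h2 : p.getVert i = v ∧ p.getVert (i + 1) = u := by
          simpa [Prod.ext_iff] using h
        exact ⟨i, hi, Or.inr ⟨h2.1, h2.2⟩⟩
    have hsurj : ∀ x : P, ∃ i, i ≤ m ∧ wf i = x := by
      intro x
      by_cases hx : x = w0
      · refine ⟨0, by omega, ?_⟩
        rw [hwf]
        simpa [Walk.getVert_zero] using hx.symm
      · obtain ⟨q⟩ := hreach x w0
        cases q with
        | nil => exact absurd rfl hx
        | cons hadj q' =>
          obtain ⟨i, hi, hor⟩ := hedge _ _ hadj
          rcases hor with ⟨h1, _⟩ | ⟨_, h2⟩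
          · exact ⟨i, by omega, h1⟩
          · exact ⟨i + 1, by omega, h2⟩
    refine ⟨⟨Zig m d⟩, zig_isZigzag m d, ?_, ?_⟩
    · exact
      { toFun := fun a => wf a.toFin.1
        surj := by
          intro x
          obtain ⟨i, hi, hwi⟩ := hsurj x
          exact ⟨(Zig.mk ⟨i, Nat.lt_succ_of_le hi⟩ : Zig m d), hwi⟩
        mono := by
          intro a b hab
          rcases zig_le_iff.mp hab with ⟨h1, h2⟩ | ⟨h1, h2⟩
          · exact chain_up wf _ _ h1 h2
          · refine chain_down wf _ _ h1 ?_
            intro k hk1 hk2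
            have hkm : k < m := lt_of_lt_of_le hk2 (Nat.lt_succ_iff.mp a.toFin.2)
            rcases (hGadj _ _).mp (hadjk k hkm) with h | h
            · exact absurd h (h2 k hk1 hk2)
            · exact h
        hasse := by
          intro u v huv
          obtain ⟨i, hi, hor⟩ := hedge u v ((hGadj u v).mpr (Or.inl huv))
          rcases hor with ⟨h1, h2⟩ | ⟨h1, h2⟩
          · refine ⟨(Zig.mk ⟨i, by omega⟩ : Zig m d), (Zig.mk ⟨i + 1, by omega⟩ : Zig m d), ?_, h1, h2⟩
            refine zig_le_iff.mpr (Or.inl ⟨show i ≤ i + 1 by omega, fun k hk1 hk2 => ?_⟩)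
            have hki : k = i := by
              have hk1' : i ≤ k := hk1
              have hk2' : k < i + 1 := hk2
              omega
            subst hki
            show wf k ⋖ wf (k + 1)
            rw [h1, h2]
            exact huv
          · refine ⟨(Zig.mk ⟨i + 1, by omega⟩ : Zig m d), (Zig.mk ⟨i, by omega⟩ : Zig m d), ?_, h2, h1⟩
            refine zig_le_iff.mpr (Or.inr ⟨show i ≤ i + 1 by omega, fun k hk1 hk2 => ?_⟩)
            have hki : k = i := by
              have hk1' : i ≤ k := hk1
              have hk2' : k < i + 1 := hk2
              omega
            subst hki
            show ¬ (wf k ⋖ wf (k + 1))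
            rw [h1, h2]
            intro hvu
            exact lt_asymm huv.lt hvu.lt }
    · have h1 : Fintype.card (Zig m d) = m + 1 := Zig.card m d
      have h2 : coverCard (Zig m d) ≤ m := zig_cover_card_le m d
      have h3 : (compVerts G w0).card ≤ Fintype.card P := by
        calc (compVerts G w0).card ≤ Finset.univ.card := Finset.card_le_univ _
          _ = Fintype.card P := Finset.card_univ
      have h4 : (compEdges G w0).card ≤ coverCard P := by
        have hchoice : ∀ f : Sym2 P, f ∈ compEdges G w0 →
            ∃ x : P × P, x.1 ⋖ x.2 ∧ f = s(x.1, x.2) := by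
          intro f hf
          have hf1 : f ∈ G.edgeSet := (mem_compEdges.mp hf).1
          clear hf
          revert hf1
          induction f with
          | _ a b =>
            intro hf1
            rcases (hGadj a b).mp ((G.mem_edgeSet).mp hf1) with h | h
            · exact ⟨(a, b), h, rfl⟩
            · exact ⟨(b, a), h, Sym2.eq_swap⟩
        have heq : (compEdges G w0).card = Nat.card {f // f ∈ compEdges G w0} := by
          rw [Nat.card_eq_fintype_card, Fintype.card_coe]
        rw [heq, coverCard]
        apply Nat.card_le_card_of_injective
          (f := fun f : {f // f ∈ compEdges G w0} =>
            (⟨(hchoice f.1 f.2).choose, (hchoice f.1 f.2).choose_spec.1⟩ :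
              {x : P × P // x.1 ⋖ x.2}))
        intro f1 f2 h
        apply Subtype.ext
        have e1 := (hchoice f1.1 f1.2).choose_spec.2
        have e2 := (hchoice f2.1 f2.2).choose_spec.2
        simp only [Subtype.mk.injEq] at h
        rw [e1, e2, h]
      show posetSize (Zig m d) ≤ 2 * posetSize P + 1
      rw [posetSize, posetSize, h1]
      omega
end

section
/- Let M_ZZ be a zigzag module over a finite zigzag poset P_ZZ and let I ⊆ M_ZZ be a limit module that is not a full interval module, with representative b^I. Then for every point p in the support of I, the canonical map i_p : M_ZZ(p) → colim M_ZZ sends b^I_p to 0; consequently any representative of I is sent to zero in the colimit of M_ZZ. -/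
open Module

variable {F : Type} [Field F] {P : Type} [PartialOrder P] {Q : Type} [PartialOrder Q]

/-- Auxiliary: the colimit identifies a vector with its pushforward. -/
lemma colimInj_map_eq {F : Type} [Field F] {P : Type} [PartialOrder P]
    [DecidableEq P] (M : PModule F P) {p q : P} (h : p ≤ q) (v : M.V p) :
    M.colimInj p v = M.colimInj q (M.map h v) := by
  have hmem : Pi.single p v - Pi.single q (M.map h v) ∈ M.colimRel :=
    Submodule.subset_span ⟨p, q, h, v, rfl⟩
  have : M.colimRel.mkQ (Pi.single p v) = M.colimRel.mkQ (Pi.single q (M.map h v)) := by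
    rw [← sub_eq_zero, ← map_sub, Submodule.mkQ_apply, Submodule.Quotient.mk_eq_zero]
    exact hmem
  exact this

/-- Auxiliary: vanishing in the colimit propagates along comparabilities. -/
lemma step_iff {F : Type} [Field F] {P : Type} [PartialOrder P]
    [DecidableEq P] (M : PModule F P) (N : PSubmodule M)
    (hsurj : ∀ (p q : P) (h : p ≤ q), (N.S p).map (M.map h) = N.S q)
    (b : ∀ p, M.V p) (hb : IsRepr N b) {p q : P} (h : p ≤ q) :
    (M.colimInj p (b p) = 0) ↔ (M.colimInj q (b q) = 0) := by
  have hmap : (N.S p).map (M.map h) = N.S q := hsurj p q h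
  have hspan : Submodule.span F {M.map h (b p)} = N.S q := by
    rw [← hmap, hb p, Submodule.map_span, Set.image_singleton]
  constructor
  · intro hz
    have : b q ∈ Submodule.span F {M.map h (b p)} := by
      rw [hspan, hb q]; exact Submodule.mem_span_singleton_self _
    obtain ⟨d, hd⟩ := Submodule.mem_span_singleton.mp this
    have heq := colimInj_map_eq M h (b p)
    rw [← hd, map_smul, ← heq, hz, smul_zero]
  · intro hz
    have : M.map h (b p) ∈ Submodule.span F {b q} := by
      rw [← hb q, ← hspan]; exact Submodule.mem_span_singleton_self _
    obtain ⟨c, hc⟩ := Submodule.mem_span_singleton.mp this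
    rw [colimInj_map_eq M h (b p), ← hc, map_smul, hz, smul_zero]

/-- A limit module of a zigzag module which is not a full
interval module has all of its representative vectors sent to `0` by the
canonical maps into the colimit. -/
theorem nonfull_limit_module_representative_vanishes_in_colimit
    {F : Type} [Field F] {P : Type} [PartialOrder P] [Fintype P] [DecidableEq P]
    (hzz : IsZigzag P) (M : PModule F P)
    (N : PSubmodule M) (hN : IsLimitModule M N)
    (hnotfull : ¬ IsFullIntervalSub M N)
    (b : ∀ p, M.V p) (hb : IsRepr N b) :
    ∀ p, M.colimInj p (b p) = 0 := by
  classical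
  have hsurj := hN.2
  -- find a point where b vanishes
  have hex : ∃ p₀ : P, b p₀ = 0 := by
    by_contra hcon
    push_neg at hcon
    apply hnotfull
    refine ⟨fun p => ?_, hsurj⟩
    rw [hb p, finrank_span_singleton (hcon p)]
  obtain ⟨p₀, hp₀⟩ := hex
  have hZp₀ : M.colimInj p₀ (b p₀) = 0 := by rw [hp₀, map_zero]
  obtain ⟨e, hcov, _⟩ := hzz
  have hpos : 0 < Fintype.card P := Fintype.card_pos_iff.mpr ⟨p₀⟩
  -- all points are equivalent to the first along the zigzag
  have hchain : ∀ (i : ℕ) (hi : i < Fintype.card P),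
      (M.colimInj (e ⟨i, hi⟩) (b (e ⟨i, hi⟩)) = 0) ↔
      (M.colimInj (e ⟨0, hpos⟩) (b (e ⟨0, hpos⟩)) = 0) := by
    intro i
    induction i with
    | zero => intro hi; rfl
    | succ n ih =>
      intro hi
      have hn : n < Fintype.card P := Nat.lt_of_succ_lt hi
      have hedge : (M.colimInj (e ⟨n, hn⟩) (b (e ⟨n, hn⟩)) = 0) ↔
          (M.colimInj (e ⟨n + 1, hi⟩) (b (e ⟨n + 1, hi⟩)) = 0) := by
        rcases hcov n hn hi with hc | hc
        · exact step_iff M N hsurj b hb hc.le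
        · exact (step_iff M N hsurj b hb hc.le).symm
      exact hedge.symm.trans (ih hn)
  have hall : ∀ p : P, (M.colimInj p (b p) = 0) ↔
      (M.colimInj (e ⟨0, hpos⟩) (b (e ⟨0, hpos⟩)) = 0) := by
    intro p
    have h1 := hchain (e.symm p).val (e.symm p).isLt
    rw [show (⟨(e.symm p).val, (e.symm p).isLt⟩ : Fin (Fintype.card P)) = e.symm p from rfl,
      Equiv.apply_symm_apply] at h1
    exact h1
  have h0 : M.colimInj (e ⟨0, hpos⟩) (b (e ⟨0, hpos⟩)) = 0 :=
    (hall p₀).mp hZp₀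
  intro p
  exact (hall p).mpr h0
end
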